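/- Assume the action space 𝒜 is finite. Fix γ > 0 and, for a family of e-variables E(·, θ), define E_γ(Y, θ) = γ·E(Y, θ) + 1, δ(Y) ∈ argmin_{a ∈ 𝒜} sup_{θ ∈ Θ} L(a, θ)/E_γ(θ, Y), and R(Y) = min_{a ∈ 𝒜} sup_{θ ∈ Θ} L(a, θ)/E_γ(θ, Y). Then for any adoption variable Q with Q ≤ 1(R(Y) ≤ C), for all (θ, P) ∈ 𝓜: E_P[L(δ_Q(Y), θ)] ≤ E_P[max(L(δ(Y), θ)/R(Y), 1)·C] ≤ (1 + γ)·C. -/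

import Mathlib

open MeasureTheory Set
open scoped ENNReal

/-- Proposition (`truncated`, first part): with `𝒜` finite, `γ > 0`,
`E_γ(Y,θ) = γ·E(Y,θ) + 1` for a family of e-variables `E(·,θ)`, `δ(Y)` minimizing
`sup_θ L(a,θ)/E_γ(Y,θ)` over `a ∈ 𝒜` and `R(Y)` the minimized value, any adoption rule
with `Q ≤ 1(R(Y) ≤ C)` satisfies
`E_P[L(δ_Q(Y),θ)] ≤ E_P[max(L(δ(Y),θ)/R(Y), 1)·C] ≤ (1+γ)·C` for all `(θ,P) ∈ M`. -/
theorem statement12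
    {Y : Type*} [MeasurableSpace Y] {A : Type*} [Fintype A] [Nonempty A] {Θ : Type*}
    (L : A → Θ → ℝ≥0∞) (hLpos : ∀ a θ, 0 < L a θ) (hLfin : ∀ a θ, L a θ < ⊤)
    (M : Set (Θ × Measure Y))
    (hMprob : ∀ p ∈ M, IsProbabilityMeasure p.2)
    (Evar : Y → Θ → ℝ≥0∞)
    (hE : ∀ θ : Θ, ∀ P : Measure Y, (θ, P) ∈ M → ∫⁻ y, Evar y θ ∂P ≤ 1)
    (γ : ℝ) (hγ : 0 < γ)
    (δ : Y → A) (R : Y → ℝ≥0∞)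
    -- `δ(Y)` attains the minimum over `𝒜` of the worst-case truncated E-posterior loss
    (hδ : ∀ y, (⨆ θ : Θ, L (δ y) θ / (ENNReal.ofReal γ * Evar y θ + 1))
        = ⨅ a : A, ⨆ θ : Θ, L a θ / (ENNReal.ofReal γ * Evar y θ + 1))
    -- and `R(Y)` is the minimized value
    (hR : ∀ y, R y = ⨅ a : A, ⨆ θ : Θ, L a θ / (ENNReal.ofReal γ * Evar y θ + 1))
    (C : ℝ≥0∞) (hC : 0 < C) (hCfin : C < ⊤)
    (Q : Y → Bool) (hQ : ∀ y, Q y = true → R y ≤ C) :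
    ∀ p ∈ M,
      ∫⁻ y, (if Q y then L (δ y) p.1 else C) ∂p.2
          ≤ ∫⁻ y, max (L (δ y) p.1 / R y) 1 * C ∂p.2 ∧
      ∫⁻ y, max (L (δ y) p.1 / R y) 1 * C ∂p.2 ≤ (1 + ENNReal.ofReal γ) * C := by

  intro p hp
  obtain ⟨θ, P⟩ := p
  have hprob : IsProbabilityMeasure P := hMprob _ hp
  simp only at *
  set g : Y → ℝ≥0∞ := fun y => ENNReal.ofReal γ * Evar y θ + 1 with hg
  have hg1 : ∀ y, 1 ≤ g y := fun y => le_add_self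
  have hg0 : ∀ y, g y ≠ 0 := fun y => (zero_lt_one.trans_le (hg1 y)).ne'
  have hkey : ∀ y, L (δ y) θ / R y ≤ g y := by
    intro y
    rcases eq_or_ne (g y) ⊤ with hEg | hEg
    · rw [hEg]; exact le_top
    · have hRge : L (δ y) θ / g y ≤ R y := by
        rw [hR, ← hδ]
        exact le_iSup (fun θ' => L (δ y) θ' / (ENNReal.ofReal γ * Evar y θ' + 1)) θ
      refine ENNReal.div_le_of_le_mul ?_
      calc L (δ y) θ = g y * (L (δ y) θ / g y) :=
            (ENNReal.mul_div_cancel (hg0 y) hEg).symm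
        _ ≤ g y * R y := mul_le_mul_right hRge _
  constructor
  · refine lintegral_mono fun y => ?_
    by_cases hq : Q y = true
    · have hRC : R y ≤ C := hQ y hq
      simp only [hq, if_true]
      rcases eq_or_ne (R y) 0 with h0 | h0
      · have htop : L (δ y) θ / R y = ⊤ := by
          rw [h0, ENNReal.div_zero (hLpos _ _).ne']
        rw [max_eq_left (htop ▸ le_top), htop, ENNReal.top_mul hC.ne']
        exact le_top
      · calc L (δ y) θ = L (δ y) θ / R y * R y :=
              (ENNReal.div_mul_cancel h0 (hRC.trans_lt hCfin).ne).symm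
          _ ≤ L (δ y) θ / R y * C := mul_le_mul_right hRC _
          _ ≤ max (L (δ y) θ / R y) 1 * C := mul_le_mul_left (le_max_left _ _) _
    · simp only [hq, if_false, Bool.false_eq_true]
      calc C = 1 * C := (one_mul C).symm
        _ ≤ max (L (δ y) θ / R y) 1 * C := mul_le_mul_left (le_max_right _ _) _
  · calc ∫⁻ y, max (L (δ y) θ / R y) 1 * C ∂P
        ≤ ∫⁻ y, g y * C ∂P :=
          lintegral_mono fun y => mul_le_mul_left (max_le (hkey y) (hg1 y)) _
      _ = ∫⁻ y, C * g y ∂P := by simp_rw [mul_comm]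
      _ = C * ∫⁻ y, g y ∂P := lintegral_const_mul' _ _ hCfin.ne
      _ = C * (ENNReal.ofReal γ * ∫⁻ y, Evar y θ ∂P + 1) := by
          rw [hg, lintegral_add_right _ measurable_const,
            lintegral_const_mul' _ _ ENNReal.ofReal_ne_top, lintegral_one,
            measure_univ]
      _ ≤ C * (ENNReal.ofReal γ * 1 + 1) := by
          exact mul_le_mul_right (add_le_add_left
            (mul_le_mul_right (hE θ P hp) _) _) _
      _ = (1 + ENNReal.ofReal γ) * C := by rw [mul_one, add_comm, mul_comm]
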